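/- arXiv:2112.05382 — 3 statements merged into one kernel-verified Lean document; each statement's English description precedes it below -/
import Mathlib

section
/- Let P₁,…,P_N ∈ ℂ[z₁,…,z_d] be nonzero homogeneous polynomials and δ₁,…,δ_N > 0 satisfy Σ_k δ_k² · deg P_k ≤ 1. If p ∈ S^{2d-1} maximizes the function x ↦ ∏_k |P_k(x)|^{δ_k²} on the unit sphere, then for every k, every zero q ∈ S^{2d-1} of P_k satisfies arccos|⟨p,q⟩| ≥ arcsin δ_k. -/
open Real Finset

namespace ZeroAvoid

variable {d : ℕ}

/-- evaluation of a homogeneous polynomial at a scalar multiple -/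
lemma homog_eval_smul {n : ℕ} {P : MvPolynomial (Fin d) ℂ} (h : P.IsHomogeneous n)
    (c : ℂ) (x : Fin d → ℂ) :
    MvPolynomial.eval (fun i => c * x i) P = c ^ n * MvPolynomial.eval x P := by
  rw [MvPolynomial.eval_eq', MvPolynomial.eval_eq', Finset.mul_sum]
  apply Finset.sum_congr rfl
  intro a ha
  have hdeg : ∑ i, a i = n := by
    have h2 := h (MvPolynomial.mem_support_iff.mp ha)
    simp only [Finsupp.weight_apply, Pi.one_apply, smul_eq_mul, mul_one] at h2
    rw [← h2, Finsupp.sum]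
    exact (Finset.sum_subset (Finset.subset_univ _) (fun i _ hi => by
      simpa using Finsupp.notMem_support_iff.mp hi)).symm
  calc (MvPolynomial.coeff a P) * ∏ i, (c * x i) ^ a i
      = (MvPolynomial.coeff a P) * ((∏ i, c ^ a i) * ∏ i, x i ^ a i) := by
        rw [← Finset.prod_mul_distrib]; simp [mul_pow]
    _ = c ^ n * ((MvPolynomial.coeff a P) * ∏ i, x i ^ a i) := by
        rw [Finset.prod_pow_eq_pow_sum, hdeg]; ring

/-- `Polynomial.eval` commutes with `MvPolynomial.aeval` into `Polynomial ℂ`. -/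
lemma eval_aeval (g : Fin d → Polynomial ℂ) (P : MvPolynomial (Fin d) ℂ) (η : ℂ) :
    Polynomial.eval η (MvPolynomial.aeval g P) =
      MvPolynomial.eval (fun i => Polynomial.eval η (g i)) P := by
  rw [MvPolynomial.aeval_def]
  have h := MvPolynomial.eval₂_comp_left (Polynomial.evalRingHom η)
    (algebraMap ℂ (Polynomial ℂ)) g P
  simp only [Polynomial.coe_evalRingHom] at h
  rw [h]
  have h2 : (Polynomial.evalRingHom η).comp (algebraMap ℂ (Polynomial ℂ)) = RingHom.id ℂ := by
    ext z; simp [Polynomial.algebraMap_apply]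
  rw [h2]
  rfl

/-- maximum modulus principle for a polynomial on a closed disk -/
lemma maxmod (ψ : Polynomial ℂ) {R : ℝ} (hR : 0 < R) {η₀ : ℂ} (hη₀ : ‖η₀‖ ≤ R)
    {C : ℝ} (hC : ∀ η : ℂ, ‖η‖ = R → ‖ψ.eval η‖ ≤ C) :
    ‖ψ.eval η₀‖ ≤ C := by
  have hmax := Complex.norm_le_of_forall_mem_frontier_norm_le
    (U := Metric.ball (0:ℂ) R) Metric.isBounded_ball
    (f := fun z => ψ.eval z)
    ((ψ.differentiable).diffContOnCl) (C := C) ?_ (z := η₀) ?_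
  · simpa using hmax
  · intro z hz
    rw [frontier_ball (0:ℂ) hR.ne'] at hz
    have : ‖z‖ = R := by simpa [Complex.dist_eq] using hz
    simpa using hC z this
  · rw [closure_ball (0:ℂ) hR.ne']
    simpa [Complex.dist_eq] using hη₀

end ZeroAvoid

namespace ZeroAvoid

lemma pow_bound_upper {v : ℝ} (hv : 0 ≤ v) {δ2 : ℝ} (hδ2 : 0 < δ2) (N : ℕ) :
    v ^ (Nat.ceil ((N:ℝ) * δ2)) ≤ (v ^ δ2) ^ N * max 1 v := by
  have hNδ : (0:ℝ) ≤ (N:ℝ) * δ2 := by positivity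
  have hle : ((Nat.ceil ((N:ℝ) * δ2) : ℕ) : ℝ) ≤ (N:ℝ) * δ2 + 1 :=
    le_of_lt (Nat.ceil_lt_add_one hNδ)
  have hge : (N:ℝ) * δ2 ≤ ((Nat.ceil ((N:ℝ) * δ2) : ℕ) : ℝ) := Nat.le_ceil _
  have hrw : (v ^ δ2) ^ N = v ^ (δ2 * N) := by
    rw [← Real.rpow_natCast (v ^ δ2) N, ← Real.rpow_mul hv]
  rcases eq_or_lt_of_le hv with h0 | hvpos
  · -- v = 0
    rcases Nat.eq_zero_or_pos (Nat.ceil ((N:ℝ) * δ2)) with hc | hc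
    · have hN0 : N = 0 := by
        by_contra hN
        have : (0:ℝ) < (N:ℝ) * δ2 := by
          have : 0 < (N:ℝ) := by exact_mod_cast Nat.pos_of_ne_zero hN
          positivity
        have h2 : (N:ℝ) * δ2 ≤ 0 := Nat.ceil_eq_zero.mp hc
        linarith
      subst hN0
      simp [hc, ← h0]
    · rw [← h0]
      rw [zero_pow (hc.ne')]
      positivity
  · rw [← Real.rpow_natCast v, hrw]
    rcases le_or_gt 1 v with h1 | h1
    · rw [max_eq_right h1]
      calc v ^ (((Nat.ceil ((N:ℝ) * δ2) : ℕ) : ℝ)) ≤ v ^ ((N:ℝ) * δ2 + 1) :=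
            Real.rpow_le_rpow_of_exponent_le h1 hle
        _ = v ^ (δ2 * N) * v := by
            rw [Real.rpow_add hvpos, mul_comm δ2, Real.rpow_one]
    · rw [max_eq_left h1.le]
      rw [mul_one]
      exact Real.rpow_le_rpow_of_exponent_ge hvpos h1.le (by rw [mul_comm]; exact hge)

lemma pow_bound_lower {v : ℝ} (hv : 0 < v) {δ2 : ℝ} (hδ2 : 0 < δ2) (N : ℕ) :
    (v ^ δ2) ^ N * min 1 v ≤ v ^ (Nat.ceil ((N:ℝ) * δ2)) := by
  have hNδ : (0:ℝ) ≤ (N:ℝ) * δ2 := by positivity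
  have hle : ((Nat.ceil ((N:ℝ) * δ2) : ℕ) : ℝ) ≤ (N:ℝ) * δ2 + 1 :=
    le_of_lt (Nat.ceil_lt_add_one hNδ)
  have hge : (N:ℝ) * δ2 ≤ ((Nat.ceil ((N:ℝ) * δ2) : ℕ) : ℝ) := Nat.le_ceil _
  have hrw : (v ^ δ2) ^ N = v ^ (δ2 * N) := by
    rw [← Real.rpow_natCast (v ^ δ2) N, ← Real.rpow_mul hv.le]
  rw [← Real.rpow_natCast v, hrw]
  rcases le_or_gt 1 v with h1 | h1
  · rw [min_eq_left h1, mul_one]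
    exact Real.rpow_le_rpow_of_exponent_le h1 (by rw [mul_comm]; exact hge)
  · rw [min_eq_right h1.le]
    calc v ^ (δ2 * N) * v = v ^ ((N:ℝ) * δ2 + 1) := by
          rw [Real.rpow_add hv, mul_comm δ2, Real.rpow_one]
      _ ≤ v ^ (((Nat.ceil ((N:ℝ) * δ2) : ℕ) : ℝ)) :=
          Real.rpow_le_rpow_of_exponent_ge hv h1.le hle

lemma kl_pos {κ σ : ℝ} (h0 : 0 < σ) (hσκ : σ < κ) (hκ : κ < 1) :
    0 < κ * (Real.log κ - Real.log σ) + (1 - κ) * (Real.log (1-κ) - Real.log (1-σ)) := by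
  have hκ0 : 0 < κ := h0.trans hσκ
  have h1κ : 0 < 1 - κ := by linarith
  have h1σ : 0 < 1 - σ := by linarith
  have l1 : Real.log σ - Real.log κ < σ/κ - 1 := by
    have := Real.log_lt_sub_one_of_pos (x := σ/κ) (by positivity)
      (by intro h; rw [div_eq_one_iff_eq hκ0.ne'] at h; exact hσκ.ne h)
    rwa [Real.log_div h0.ne' hκ0.ne'] at this
  have l2 : Real.log (1-σ) - Real.log (1-κ) ≤ (1-σ)/(1-κ) - 1 := by
    have := Real.log_le_sub_one_of_pos (x := (1-σ)/(1-κ)) (by positivity)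
    rwa [Real.log_div h1σ.ne' h1κ.ne'] at this
  have e1 : κ * (σ/κ - 1) = σ - κ := by field_simp
  have e2 : (1-κ) * ((1-σ)/(1-κ) - 1) = κ - σ := by field_simp; ring
  nlinarith [mul_lt_mul_of_pos_left l1 hκ0, mul_le_mul_of_nonneg_left l2 h1κ.le]

end ZeroAvoid


namespace ZeroAvoid
variable {d : ℕ}

set_option maxHeartbeats 1600000 in
lemma core_margin {N : ℕ} (P : Fin N → MvPolynomial (Fin d) ℂ) (m : Fin N → ℕ)
    (hhom : ∀ j, (P j).IsHomogeneous (m j)) (δ : Fin N → ℝ) (hδ : ∀ j, 0 < δ j)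
    (k : Fin N) (qc rc pc : Fin d → ℂ) (γ : ℂ)
    (hpc : ∀ i, pc i = rc i + γ * qc i)
    (hqzero : MvPolynomial.eval qc (P k) = 0)
    (hPp : ∀ j, MvPolynomial.eval pc (P j) ≠ 0)
    (t s2 M H : ℝ) (htdef : t = ‖γ‖) (ht : 0 < t) (hs2pos : 0 < s2)
    (hMdef : M = ∏ j, ‖MvPolynomial.eval pc (P j)‖ ^ (δ j ^ 2))
    (hMpos : 0 < M)
    (hHdef : H = ∑ j, δ j ^ 2 * (m j : ℝ))
    (hmaxbound : ∀ ζ : ℂ,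
      ∏ j, ‖MvPolynomial.eval (fun i => rc i + ζ * qc i) (P j)‖ ^ (δ j ^ 2)
        ≤ M * (s2 + ‖ζ‖ ^ 2) ^ (H / 2)) :
    ∀ R : ℝ, 0 < R → 1 ≤ R * t →
      (δ k ^ 2 - H) * Real.log (R * t) - (H / 2) * Real.log (s2 + (R⁻¹) ^ 2) ≤ 0 := by
  intro R hR hRt
  by_contra hε'
  push_neg at hε'
  set w : ℝ := δ k ^ 2 with hwdef
  set ρ : ℝ := R⁻¹ with hρdef
  have hρpos : 0 < ρ := inv_pos.mpr hR
  have hRt0 : 0 < R * t := by positivity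
  have hlogRt : 0 ≤ Real.log (R * t) := Real.log_nonneg hRt
  have hs2ρpos : 0 < s2 + ρ ^ 2 := by positivity
  have hγne : γ ≠ 0 := by
    intro h
    rw [htdef, h] at ht
    simp at ht
  -- uniform bound on the circle of radius ρ
  obtain ⟨C₁, hC₁ge, hC₁⟩ : ∃ C₁ : ℝ, 1 ≤ C₁ ∧ ∀ ζ : ℂ, ‖ζ‖ = ρ →
      ∏ j, max 1 (‖MvPolynomial.eval (fun i => rc i + ζ * qc i) (P j)‖) ≤ C₁ := by
    have hcont : Continuous (fun ζ : ℂ =>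
        ∏ j, max 1 (‖MvPolynomial.eval (fun i => rc i + ζ * qc i) (P j)‖)) := by
      refine continuous_finset_prod _ (fun j _ => ?_)
      apply Continuous.max continuous_const
      have hrepr : (fun ζ : ℂ => MvPolynomial.eval (fun i => rc i + ζ * qc i) (P j))
          = fun ζ => Polynomial.eval ζ (MvPolynomial.aeval
              (fun i => Polynomial.C (rc i) + Polynomial.X * Polynomial.C (qc i)) (P j)) := by
        funext ζ
        rw [eval_aeval]
        have hfe : (fun i => Polynomial.eval ζ
              (Polynomial.C (rc i) + Polynomial.X * Polynomial.C (qc i)))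
            = fun i => rc i + ζ * qc i := by
          funext i
          simp only [Polynomial.eval_add, Polynomial.eval_mul, Polynomial.eval_C,
            Polynomial.eval_X]
        rw [hfe]
      have hc2 : Continuous (fun ζ : ℂ =>
          MvPolynomial.eval (fun i => rc i + ζ * qc i) (P j)) := by
        rw [hrepr]
        exact Polynomial.continuous _
      exact continuous_norm.comp hc2
    have hne : (Metric.sphere (0:ℂ) ρ).Nonempty := NormedSpace.sphere_nonempty.mpr hρpos.le
    obtain ⟨ζ₀, hζ₀mem, hζ₀⟩ :=
      (isCompact_sphere (0:ℂ) ρ).exists_isMaxOn hne hcont.continuousOn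
    refine ⟨max 1 (∏ j, max 1 (‖
        MvPolynomial.eval (fun i => rc i + ζ₀ * qc i) (P j)‖)), le_max_left _ _, ?_⟩
    intro ζ hζ
    have hmem : ζ ∈ Metric.sphere (0:ℂ) ρ := by
      simp only [Metric.mem_sphere, Complex.dist_eq, sub_zero]
      exact hζ
    exact le_trans (hζ₀ hmem) (le_max_right _ _)
  have hC₁pos : 0 < C₁ := lt_of_lt_of_le one_pos hC₁ge
  set c₀ : ℝ := ∏ j, min 1 (‖MvPolynomial.eval pc (P j)‖) with hc₀def
  have hc₀pos : 0 < c₀ := Finset.prod_pos fun j _ =>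
    lt_min one_pos (norm_pos_iff.mpr (hPp j))
  have hc₀le : c₀ ≤ 1 :=
    Finset.prod_le_one (fun j _ => le_of_lt (lt_min one_pos
      (norm_pos_iff.mpr (hPp j)))) (fun j _ => min_le_left _ _)
  -- the key inequality for every NN
  have key : ∀ NN : ℕ,
      (NN : ℝ) * ((w - H) * Real.log (R * t) - (H / 2) * Real.log (s2 + ρ ^ 2)) ≤
        Real.log C₁ - Real.log c₀ + (∑ j, (m j : ℝ)) * Real.log (R * t) := by
    intro NN
    have hGeval : ∀ (η : ℂ), η ≠ 0 → ∀ j, ‖(MvPolynomial.aeval (fun i =>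
          Polynomial.C (qc i) + Polynomial.X * Polynomial.C (rc i)) (P j)).eval η‖
        = ‖η‖ ^ (m j) *
          ‖MvPolynomial.eval (fun i => rc i + η⁻¹ * qc i) (P j)‖ := by
      intro η hη j
      rw [eval_aeval]
      have hfe : (fun i => Polynomial.eval η
            (Polynomial.C (qc i) + Polynomial.X * Polynomial.C (rc i)))
          = fun i => η * (rc i + η⁻¹ * qc i) := by
        funext i
        simp only [Polynomial.eval_add, Polynomial.eval_mul, Polynomial.eval_C,
          Polynomial.eval_X]
        field_simp
        ring
      rw [hfe, homog_eval_smul (hhom j), norm_mul, norm_pow]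
    set nn : Fin N → ℕ := fun j => Nat.ceil ((NN : ℝ) * δ j ^ 2) with hnn
    set G : Fin N → Polynomial ℂ := fun j =>
      MvPolynomial.aeval (fun i =>
        Polynomial.C (qc i) + Polynomial.X * Polynomial.C (rc i)) (P j) with hG
    have hpc' : (fun i => rc i + γ * qc i) = pc := by
      funext i
      exact (hpc i).symm
    have hGp : ∀ j, ‖(G j).eval γ⁻¹‖
        = (t⁻¹) ^ (m j) * ‖MvPolynomial.eval pc (P j)‖ := by
      intro j
      rw [hG, hGeval γ⁻¹ (inv_ne_zero hγne) j, inv_inv, hpc', norm_inv, ← htdef]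
    set B : Polynomial ℂ := ∏ j, (G j) ^ (nn j) with hB
    have hdvd : Polynomial.X ^ (nn k) ∣ B := by
      rw [hB]
      refine dvd_trans (pow_dvd_pow_of_dvd ?_ (nn k))
        (Finset.dvd_prod_of_mem (fun j => (G j) ^ (nn j)) (Finset.mem_univ k))
      rw [Polynomial.X_dvd_iff, Polynomial.coeff_zero_eq_eval_zero, hG, eval_aeval]
      have hfe : (fun i => Polynomial.eval 0
            (Polynomial.C (qc i) + Polynomial.X * Polynomial.C (rc i)))
          = fun i => qc i := by funext i; simp
      rw [hfe]
      exact hqzero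
    obtain ⟨ψ, hψ⟩ := hdvd
    set DD : ℕ := ∑ j, nn j * m j with hDD
    set S2 : ℝ := (s2 + ρ ^ 2) ^ (H / 2) with hS2
    have hS2pos : 0 < S2 := Real.rpow_pos_of_pos hs2ρpos _
    -- upper bound on the circle of radius R
    have circ : ∀ η : ℂ, ‖η‖ = R →
        ‖ψ.eval η‖ ≤ R ^ DD * (M * S2) ^ NN * C₁ / R ^ (nn k) := by
      intro η hη
      have hηne : η ≠ 0 := by
        intro h
        rw [h, norm_zero] at hη
        exact hR.ne hη
      have hζρ : ‖η⁻¹‖ = ρ := by rw [norm_inv, hη, hρdef]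
      have hB1 : ‖B.eval η‖ = ‖ψ.eval η‖ * R ^ (nn k) := by
        rw [hψ, Polynomial.eval_mul, Polynomial.eval_pow, Polynomial.eval_X,
          norm_mul, norm_pow, hη]
        ring
      have hB2 : ‖B.eval η‖ = R ^ DD *
          ∏ j, ‖MvPolynomial.eval (fun i => rc i + η⁻¹ * qc i) (P j)‖ ^ (nn j) := by
        rw [hB, Polynomial.eval_prod, norm_prod]
        have e1 : ∀ j ∈ Finset.univ, ‖Polynomial.eval η ((G j) ^ (nn j))‖
            = R ^ (m j * nn j) *
              ‖MvPolynomial.eval (fun i => rc i + η⁻¹ * qc i) (P j)‖ ^ (nn j) := by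
          intro j _
          rw [Polynomial.eval_pow, norm_pow, hG, hGeval η hηne j, hη, mul_pow, ← pow_mul]
        rw [Finset.prod_congr rfl e1, Finset.prod_mul_distrib,
          Finset.prod_pow_eq_pow_sum]
        congr 2
        rw [hDD]
        exact Finset.sum_congr rfl fun j _ => mul_comm _ _
      have hvb : ∏ j, ‖
            MvPolynomial.eval (fun i => rc i + η⁻¹ * qc i) (P j)‖ ^ (nn j)
          ≤ (M * S2) ^ NN * C₁ := by
        calc ∏ j, ‖MvPolynomial.eval (fun i => rc i + η⁻¹ * qc i) (P j)‖ ^ (nn j)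
            ≤ ∏ j, ((‖MvPolynomial.eval (fun i => rc i + η⁻¹ * qc i) (P j)‖
                ^ (δ j ^ 2)) ^ NN *
                max 1 (‖MvPolynomial.eval (fun i => rc i + η⁻¹ * qc i) (P j)‖)) := by
              refine Finset.prod_le_prod
                (fun j _ => pow_nonneg (norm_nonneg _) _) (fun j _ => ?_)
              exact pow_bound_upper (norm_nonneg _) (pow_pos (hδ j) 2) NN
          _ = (∏ j, ‖MvPolynomial.eval (fun i => rc i + η⁻¹ * qc i) (P j)‖
                ^ (δ j ^ 2)) ^ NN *
              ∏ j, max 1 (‖MvPolynomial.eval (fun i => rc i + η⁻¹ * qc i) (P j)‖) := by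
              rw [Finset.prod_mul_distrib, Finset.prod_pow]
          _ ≤ (M * S2) ^ NN * C₁ := by
              refine mul_le_mul ?_ (hC₁ η⁻¹ hζρ)
                (Finset.prod_nonneg fun j _ => le_max_of_le_left zero_le_one)
                (pow_nonneg (mul_nonneg hMpos.le hS2pos.le) _)
              refine pow_le_pow_left₀ (Finset.prod_nonneg fun j _ => by positivity) ?_ NN
              have hmb := hmaxbound η⁻¹
              rw [hζρ] at hmb
              rw [hS2]
              exact hmb
      rw [le_div_iff₀ (pow_pos hR _), ← hB1, hB2]
      calc R ^ DD * ∏ j, ‖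
            MvPolynomial.eval (fun i => rc i + η⁻¹ * qc i) (P j)‖ ^ (nn j)
          ≤ R ^ DD * ((M * S2) ^ NN * C₁) :=
            mul_le_mul_of_nonneg_left hvb (pow_nonneg hR.le _)
        _ = R ^ DD * (M * S2) ^ NN * C₁ := by ring
    -- maximum principle at γ⁻¹
    have hinv : ‖γ⁻¹‖ ≤ R := by
      rw [norm_inv, ← htdef]
      have h' : t⁻¹ * t ≤ R * t := by
        rw [inv_mul_cancel₀ ht.ne']
        exact hRt
      exact le_of_mul_le_mul_right h' ht
    have hψmax := maxmod ψ hR hinv circ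
    -- lower bound at γ⁻¹
    have hBlow : (t⁻¹) ^ DD * (M ^ NN * c₀) ≤ ‖B.eval γ⁻¹‖ := by
      have hB2 : ‖B.eval γ⁻¹‖ = (t⁻¹) ^ DD *
          ∏ j, ‖MvPolynomial.eval pc (P j)‖ ^ (nn j) := by
        rw [hB, Polynomial.eval_prod, norm_prod]
        have e1 : ∀ j ∈ Finset.univ, ‖Polynomial.eval γ⁻¹ ((G j) ^ (nn j))‖
            = (t⁻¹) ^ (m j * nn j) *
              ‖MvPolynomial.eval pc (P j)‖ ^ (nn j) := by
          intro j _
          rw [Polynomial.eval_pow, norm_pow, hGp j, mul_pow, ← pow_mul]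
        rw [Finset.prod_congr rfl e1, Finset.prod_mul_distrib,
          Finset.prod_pow_eq_pow_sum]
        congr 2
        rw [hDD]
        exact Finset.sum_congr rfl fun j _ => mul_comm _ _
      rw [hB2]
      refine mul_le_mul_of_nonneg_left ?_ (pow_nonneg (inv_nonneg.mpr ht.le) _)
      calc M ^ NN * c₀
          = (∏ j, ‖MvPolynomial.eval pc (P j)‖ ^ (δ j ^ 2)) ^ NN
            * c₀ := by rw [hMdef]
        _ = ∏ j, ((‖MvPolynomial.eval pc (P j)‖ ^ (δ j ^ 2)) ^ NN
            * min 1 (‖MvPolynomial.eval pc (P j)‖)) := by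
            rw [Finset.prod_mul_distrib, Finset.prod_pow, hc₀def]
        _ ≤ ∏ j, ‖MvPolynomial.eval pc (P j)‖ ^ (nn j) := by
            refine Finset.prod_le_prod (fun j _ => mul_nonneg
              (pow_nonneg (Real.rpow_nonneg (norm_nonneg _) _) _)
              (le_min zero_le_one (norm_nonneg _))) (fun j _ => ?_)
            exact pow_bound_lower (norm_pos_iff.mpr (hPp j))
              (pow_pos (hδ j) 2) NN
    have hBψ : ‖B.eval γ⁻¹‖
        = ‖ψ.eval γ⁻¹‖ * (t⁻¹) ^ (nn k) := by
      rw [hψ, Polynomial.eval_mul, Polynomial.eval_pow, Polynomial.eval_X,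
        norm_mul, norm_pow, norm_inv, ← htdef]
      ring
    -- combine
    have htinv : 0 < t⁻¹ := inv_pos.mpr ht
    have hcomb : (t⁻¹) ^ DD * (M ^ NN * c₀)
        ≤ R ^ DD * (M * S2) ^ NN * C₁ / R ^ (nn k) * (t⁻¹) ^ (nn k) := by
      refine le_trans hBlow ?_
      rw [hBψ]
      exact mul_le_mul_of_nonneg_right hψmax (pow_nonneg (inv_nonneg.mpr ht.le) _)
    -- take logarithms
    have hMS2 : 0 < M * S2 := mul_pos hMpos hS2pos
    have ha1 : ((t⁻¹ : ℝ) ^ DD) ≠ 0 := pow_ne_zero _ (inv_ne_zero ht.ne')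
    have ha3 : ((M : ℝ) ^ NN) ≠ 0 := pow_ne_zero _ hMpos.ne'
    have ha4 : (c₀ : ℝ) ≠ 0 := hc₀pos.ne'
    have ha2 : ((M : ℝ) ^ NN * c₀) ≠ 0 := mul_ne_zero ha3 ha4
    have hb2 : ((t⁻¹ : ℝ) ^ (nn k)) ≠ 0 := pow_ne_zero _ (inv_ne_zero ht.ne')
    have hb4 : ((R : ℝ) ^ (nn k)) ≠ 0 := pow_ne_zero _ hR.ne'
    have hb6 : (C₁ : ℝ) ≠ 0 := hC₁pos.ne'
    have hb7 : ((R:ℝ) ^ DD) ≠ 0 := pow_ne_zero _ hR.ne'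
    have hb8 : (((M * S2) : ℝ) ^ NN) ≠ 0 := pow_ne_zero _ hMS2.ne'
    have hb5 : (R ^ DD * (M * S2) ^ NN : ℝ) ≠ 0 := mul_ne_zero hb7 hb8
    have hb3 : (R ^ DD * (M * S2) ^ NN * C₁ : ℝ) ≠ 0 := mul_ne_zero hb5 hb6
    have hb1 : (R ^ DD * (M * S2) ^ NN * C₁ / R ^ (nn k) : ℝ) ≠ 0 := div_ne_zero hb3 hb4
    have hlogL : Real.log ((t⁻¹) ^ DD * (M ^ NN * c₀))
        = -((DD:ℝ) * Real.log t) + ((NN:ℝ) * Real.log M + Real.log c₀) := by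
      rw [Real.log_mul ha1 ha2, Real.log_mul ha3 ha4, Real.log_pow, Real.log_pow,
        Real.log_inv]
      push_cast
      ring
    have hlogR : Real.log (R ^ DD * (M * S2) ^ NN * C₁ / R ^ (nn k) * (t⁻¹) ^ (nn k))
        = (DD:ℝ) * Real.log R + (NN:ℝ) * (Real.log M + Real.log S2) + Real.log C₁
          - (nn k : ℝ) * Real.log R - (nn k : ℝ) * Real.log t := by
      rw [Real.log_mul hb1 hb2, Real.log_div hb3 hb4, Real.log_mul hb5 hb6,
        Real.log_mul hb7 hb8, Real.log_pow, Real.log_pow, Real.log_pow, Real.log_pow,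
        Real.log_mul hMpos.ne' hS2pos.ne', Real.log_inv]
      push_cast
      ring
    have hloge := Real.log_le_log
      (mul_pos (pow_pos (inv_pos.mpr ht) DD) (mul_pos (pow_pos hMpos NN) hc₀pos)) hcomb
    rw [hlogL, hlogR] at hloge
    have hlogS2 : Real.log S2 = (H / 2) * Real.log (s2 + ρ ^ 2) := by
      rw [hS2, Real.log_rpow hs2ρpos]
    have hlogRtsplit : Real.log (R * t) = Real.log R + Real.log t :=
      Real.log_mul hR.ne' ht.ne'
    have hDDle : (DD : ℝ) ≤ (NN : ℝ) * H + ∑ j, (m j : ℝ) := by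
      rw [hDD, hHdef]
      push_cast
      rw [Finset.mul_sum, ← Finset.sum_add_distrib]
      refine Finset.sum_le_sum fun j _ => ?_
      have h1 : ((nn j : ℝ)) ≤ (NN : ℝ) * δ j ^ 2 + 1 := by
        rw [hnn]
        exact le_of_lt (Nat.ceil_lt_add_one (by positivity))
      have h2 : (0:ℝ) ≤ (m j : ℝ) := Nat.cast_nonneg _
      nlinarith
    have hnnk : (NN : ℝ) * w ≤ (nn k : ℝ) := by
      rw [hnn, hwdef]
      exact Nat.le_ceil _
    have hkey1 : (DD : ℝ) * Real.log (R * t) ≤ ((NN:ℝ) * H + ∑ j, (m j : ℝ))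
        * Real.log (R * t) := mul_le_mul_of_nonneg_right hDDle hlogRt
    have hkey2 : (NN : ℝ) * w * Real.log (R * t) ≤ (nn k : ℝ) * Real.log (R * t) :=
      mul_le_mul_of_nonneg_right hnnk hlogRt
    rw [hlogS2] at hloge
    rw [hlogRtsplit] at hkey1 hkey2 ⊢
    nlinarith [hloge, hkey1, hkey2]
  -- contradiction by choosing NN large
  obtain ⟨NN, hNN⟩ := exists_nat_gt ((Real.log C₁ - Real.log c₀ +
    (∑ j, (m j : ℝ)) * Real.log (R * t)) /
    ((w - H) * Real.log (R * t) - (H / 2) * Real.log (s2 + ρ ^ 2)))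
  have hk := key NN
  rw [div_lt_iff₀ hε'] at hNN
  linarith


lemma choose_R {w H t s2 : ℝ} (hw : 0 < w) (hwH : w ≤ H) (hH1 : H ≤ 1) (ht : 0 < t)
    (hs2def : s2 = 1 - t ^ 2) (hs2pos : 0 < s2) (hs2w : s2 < w)
    (claim : ∀ R : ℝ, 0 < R → 1 ≤ R * t →
      (w - H) * Real.log (R * t) - (H / 2) * Real.log (s2 + (R⁻¹) ^ 2) ≤ 0) : False := by
  have hHpos : 0 < H := lt_of_lt_of_le hw hwH
  set κ : ℝ := w / H with hκdef
  have hκpos : 0 < κ := div_pos hw hHpos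
  have hκ1 : κ ≤ 1 := (div_le_one hHpos).mpr hwH
  have hwκ : w = κ * H := by
    rw [hκdef]; field_simp
  have hs2κ : s2 < κ := by
    have : w ≤ κ := by
      rw [hκdef, le_div_iff₀ hHpos]
      nlinarith
    linarith
  have hs2lt1 : s2 < 1 := by nlinarith
  rcases lt_or_eq_of_le hκ1 with hκlt | hκeq
  · -- subcritical case: optimal radius
    have h1κ : 0 < 1 - κ := by linarith
    set R : ℝ := Real.sqrt (κ / (s2 * (1 - κ))) with hRdef
    have harg : 0 < κ / (s2 * (1 - κ)) := by positivity
    have hR : 0 < R := Real.sqrt_pos.mpr harg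
    have hR2 : R ^ 2 = κ / (s2 * (1 - κ)) := Real.sq_sqrt harg.le
    have ht2 : t ^ 2 = 1 - s2 := by rw [hs2def]; ring
    have hR2t2 : (R * t) ^ 2 = κ * (1 - s2) / (s2 * (1 - κ)) := by
      rw [mul_pow, hR2, ht2]
      ring
    have hRt : 1 ≤ R * t := by
      have h1 : 1 < (R * t) ^ 2 := by
        rw [hR2t2, lt_div_iff₀ (by positivity)]
        nlinarith
      nlinarith [mul_pos hR ht]
    have hRtpos : 0 < R * t := mul_pos hR ht
    have hρ2 : s2 + (R⁻¹) ^ 2 = s2 / κ := by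
      rw [inv_pow, hR2]
      rw [inv_div]
      field_simp
      ring
    have hc := claim R hR hRt
    rw [hρ2] at hc
    have hlog1 : 2 * Real.log (R * t) = Real.log κ + Real.log (1 - s2)
        - Real.log s2 - Real.log (1 - κ) := by
      have e1 : Real.log ((R * t) ^ 2) = 2 * Real.log (R * t) := by
        rw [Real.log_pow]
        push_cast
        ring
      rw [← e1, hR2t2,
        Real.log_div (mul_pos hκpos (by linarith : (0:ℝ) < 1 - s2)).ne'
          (mul_pos hs2pos h1κ).ne',
        Real.log_mul hκpos.ne' (by linarith : (0:ℝ) < 1 - s2).ne',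
        Real.log_mul hs2pos.ne' h1κ.ne']
      ring
    have hlog2 : Real.log (s2 / κ) = Real.log s2 - Real.log κ :=
      Real.log_div hs2pos.ne' hκpos.ne'
    rw [hlog2] at hc
    have hKL := kl_pos hs2pos hs2κ hκlt
    have hexp : (w - H) * Real.log (R * t) - H / 2 * (Real.log s2 - Real.log κ)
        = (H / 2) * (κ * (Real.log κ - Real.log s2)
          + (1 - κ) * (Real.log (1 - κ) - Real.log (1 - s2))) := by
      rw [hwκ]
      linear_combination (H * (κ - 1) / 2) * hlog1
    nlinarith [mul_pos (by linarith : (0:ℝ) < H / 2) hKL]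
  · -- critical case: large radius
    have hweqH : w = H := by rw [hwκ, hκeq, one_mul]
    set R : ℝ := max t⁻¹ (Real.sqrt (2 / (1 - s2))) with hRdef
    have hR : 0 < R := lt_of_lt_of_le (inv_pos.mpr ht) (le_max_left _ _)
    have hRt : 1 ≤ R * t := by
      have h1 : t⁻¹ * t ≤ R * t :=
        mul_le_mul_of_nonneg_right (le_max_left _ _) ht.le
      rwa [inv_mul_cancel₀ ht.ne'] at h1
    have h1s2 : (0:ℝ) < 1 - s2 := by linarith
    have hR₀ : 0 < Real.sqrt (2 / (1 - s2)) := Real.sqrt_pos.mpr (div_pos two_pos h1s2)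
    have hρsmall : (R⁻¹) ^ 2 ≤ (1 - s2) / 2 := by
      have h2 : R⁻¹ ≤ (Real.sqrt (2 / (1 - s2)))⁻¹ :=
        inv_anti₀ hR₀ (le_max_right _ _)
      have h3 : (R⁻¹) ^ 2 ≤ ((Real.sqrt (2 / (1 - s2)))⁻¹) ^ 2 :=
        pow_le_pow_left₀ (inv_nonneg.mpr hR.le) h2 2
      have h4 : ((Real.sqrt (2 / (1 - s2)))⁻¹) ^ 2 = (1 - s2) / 2 := by
        rw [inv_pow, Real.sq_sqrt (div_pos two_pos h1s2).le, inv_div]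
      rw [h4] at h3
      exact h3
    have harg : s2 + (R⁻¹) ^ 2 < 1 := by linarith
    have hargpos : 0 < s2 + (R⁻¹) ^ 2 := by positivity
    have hlogneg : Real.log (s2 + (R⁻¹) ^ 2) < 0 := Real.log_neg hargpos harg
    have hc := claim R hR hRt
    rw [hweqH] at hc
    simp only [sub_self, zero_mul, zero_sub] at hc
    nlinarith


end ZeroAvoid

open ZeroAvoid

set_option maxHeartbeats 1000000 in
/-- Let `P₁, …, P_N` be nonzero homogeneous complex polynomials and
`δ₁, …, δ_N > 0` with `∑ δ_k² · deg P_k ≤ 1`. If `p` maximizes `∏ |P_k|^{δ_k²}` on the unit sphere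
`S^{2d-1} ⊂ ℂ^d`, then for every `k`, every zero `q ∈ S^{2d-1}` of `P_k` satisfies
`arccos |⟨p,q⟩| ≥ arcsin δ_k`. -/
theorem complex_sphere_weighted_zero_avoidance
    (d N : ℕ) (P : Fin N → MvPolynomial (Fin d) ℂ) (hP : ∀ k, P k ≠ 0)
    (m : Fin N → ℕ) (hhom : ∀ k, (P k).IsHomogeneous (m k))
    (δ : Fin N → ℝ) (hδ : ∀ k, 0 < δ k)
    (hsum : ∑ k, δ k ^ 2 * m k ≤ 1)
    (p : EuclideanSpace ℂ (Fin d)) (hp : ‖p‖ = 1)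
    (hmax : ∀ x : EuclideanSpace ℂ (Fin d), ‖x‖ = 1 →
      ∏ k, ‖MvPolynomial.eval (fun i => x i) (P k)‖ ^ (δ k ^ 2) ≤
        ∏ k, ‖MvPolynomial.eval (fun i => p i) (P k)‖ ^ (δ k ^ 2)) :
    ∀ k, ∀ q : EuclideanSpace ℂ (Fin d), ‖q‖ = 1 → MvPolynomial.eval (fun i => q i) (P k) = 0 →
      Real.arccos ‖(inner ℂ p q : ℂ)‖ ≥ Real.arcsin (δ k) := by
  intro k q hqnorm hqzero
  classical
  set M : ℝ := ∏ j, ‖MvPolynomial.eval (fun i => p i) (P j)‖ ^ (δ j ^ 2) with hMdef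
  -- d is positive
  have hd : 0 < d := by
    rcases Nat.eq_zero_or_pos d with h0 | h; swap
    · exact h
    · exfalso
      subst h0
      have : p = 0 := by
        ext i; exact absurd i.2 (by omega)
      rw [this] at hp; simp at hp
  -- a sphere point where no Pⱼ vanishes
  obtain ⟨x₀, hx₀n, hx₀⟩ : ∃ x : EuclideanSpace ℂ (Fin d), ‖x‖ = 1 ∧
      ∀ j, MvPolynomial.eval (fun i => x i) (P j) ≠ 0 := by
    set i₀ : Fin d := ⟨0, hd⟩
    have hQ : (MvPolynomial.X (R := ℂ) i₀ * ∏ j, P j) ≠ 0 :=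
      mul_ne_zero (MvPolynomial.X_ne_zero i₀)
        (Finset.prod_ne_zero_iff.mpr (fun j _ => hP j))
    obtain ⟨z, hz⟩ : ∃ z : Fin d → ℂ,
        MvPolynomial.eval z (MvPolynomial.X (R := ℂ) i₀ * ∏ j, P j) ≠ 0 := by
      by_contra h
      push_neg at h
      exact hQ (MvPolynomial.funext fun z => by simpa using h z)
    rw [map_mul, map_prod, MvPolynomial.eval_X] at hz
    have hz0 : z i₀ ≠ 0 := fun h => hz (by simp [h])
    have hzj : ∀ j, MvPolynomial.eval z (P j) ≠ 0 := by
      intro j hj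
      exact hz (by rw [Finset.prod_eq_zero (Finset.mem_univ j) hj, mul_zero])
    set zE : EuclideanSpace ℂ (Fin d) := (WithLp.equiv 2 (Fin d → ℂ)).symm z with hzE
    have hzEco : ∀ i, zE i = z i := fun i => rfl
    have hzEne : zE ≠ 0 := by
      intro h
      apply hz0
      have := congrFun (congrArg (WithLp.equiv 2 (Fin d → ℂ)) h) i₀
      simpa [hzE] using this
    refine ⟨‖zE‖⁻¹ • zE, norm_smul_inv_norm hzEne, ?_⟩
    intro j hj
    have hco : (fun i => (‖zE‖⁻¹ • zE) i) = (fun i => ((‖zE‖⁻¹ : ℝ) : ℂ) * z i) := by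
      funext i
      simp [hzEco, Complex.real_smul]
    rw [hco, homog_eval_smul (hhom j)] at hj
    rcases mul_eq_zero.mp hj with h | h
    · exact (pow_ne_zero _ (by exact_mod_cast inv_ne_zero (norm_ne_zero_iff.mpr hzEne))) h
    · exact hzj j h
  -- positivity of the maximum
  have hMpos : 0 < M := by
    refine lt_of_lt_of_le ?_ (hmax x₀ hx₀n)
    exact Finset.prod_pos fun j _ =>
      Real.rpow_pos_of_pos (norm_pos_iff.mpr (hx₀ j)) _
  have hPp : ∀ j, MvPolynomial.eval (fun i => p i) (P j) ≠ 0 := by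
    intro j hj
    have : M = 0 := by
      rw [hMdef]
      refine Finset.prod_eq_zero (Finset.mem_univ j) ?_
      rw [hj]
      simp only [norm_zero]
      exact Real.zero_rpow (pow_pos (hδ j) 2).ne'
    rw [this] at hMpos; exact lt_irrefl _ hMpos
  -- degree of P k is at least 1
  have hmk1 : 1 ≤ m k := by
    by_contra hcon
    have hmk0 : m k = 0 := by omega
    apply hPp k
    have h1 := homog_eval_smul (hhom k) 0 (fun i => p i)
    have h2 := homog_eval_smul (hhom k) 0 (fun i => q i)
    have hfun : (fun i => (0:ℂ) * p i) = (fun i => (0:ℂ) * q i) := by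
      funext i; simp
    rw [hmk0, pow_zero, one_mul] at h1 h2
    rw [hfun, h2, hqzero] at h1
    exact h1.symm
  set w : ℝ := δ k ^ 2 with hwdef
  set H : ℝ := ∑ j, δ j ^ 2 * (m j : ℝ) with hHdef
  have hw : 0 < w := pow_pos (hδ k) 2
  have hwH : w ≤ H := by
    have h1 : δ k ^ 2 * (m k : ℝ) ≤ H := by
      rw [hHdef]
      exact Finset.single_le_sum (f := fun j => δ j ^ 2 * (m j : ℝ))
        (fun j _ => by positivity) (Finset.mem_univ k)
    have h2 : (1:ℝ) ≤ (m k : ℝ) := by exact_mod_cast hmk1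
    nlinarith [pow_pos (hδ k) 2]
  have hH1 : H ≤ 1 := hsum
  have hHpos : 0 < H := lt_of_lt_of_le hw hwH
  set γ : ℂ := (inner ℂ q p : ℂ) with hγdef
  set t : ℝ := ‖γ‖ with htdef
  have habs : ‖(inner ℂ p q : ℂ)‖ = t := by
    rw [htdef, hγdef, ← inner_conj_symm p q]
    exact Complex.norm_conj _
  have ht0 : 0 ≤ t := norm_nonneg _
  -- the key estimate
  have hfin : t ^ 2 ≤ 1 - δ k ^ 2 := by
    rw [← hwdef]
    by_contra hcon
    push_neg at hcon
    have ht : 0 < t := by nlinarith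
    set r : EuclideanSpace ℂ (Fin d) := p - γ • q with hrdef
    have hpi : ∀ i, p i = r i + γ * q i := by
      intro i; simp [hrdef]
    have hqr : (inner ℂ q r : ℂ) = 0 := by
      rw [hrdef, inner_sub_right, inner_smul_right, ← hγdef,
        inner_self_eq_norm_sq_to_K, hqnorm]
      simp
    have hrq : (inner ℂ r q : ℂ) = 0 := by
      rw [← inner_conj_symm r q, hqr, map_zero]
    set s2 : ℝ := 1 - t ^ 2 with hs2def
    have hs2 : ‖r‖ ^ 2 = s2 := by
      have e1 : (inner ℂ p (γ • q) : ℂ) = Complex.normSq γ := by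
        rw [inner_smul_right, ← inner_conj_symm p q, ← hγdef, Complex.mul_conj]
      have e2 : RCLike.re (inner ℂ p (γ • q) : ℂ) = t ^ 2 := by
        rw [e1, htdef, Complex.sq_norm]
        exact RCLike.ofReal_re _
      rw [hrdef, norm_sub_sq (𝕜 := ℂ), e2, norm_smul, hp, hqnorm]
      rw [← htdef, hs2def]
      ring
    have hr0 : r ≠ 0 := by
      intro h
      apply hPp k
      have hfe : (fun i => p i) = (fun i => γ * q i) := by
        funext i; rw [hpi i, h]; simp
      rw [hfe, homog_eval_smul (hhom k), hqzero, mul_zero]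
    have hs2pos : 0 < s2 := by
      rw [← hs2]
      exact pow_pos (norm_pos_iff.mpr hr0) 2
    have hs2w : s2 < w := by rw [hs2def]; linarith
    have ht1 : t < 1 := by nlinarith
    -- the maximality bound along the complex line r + ζ q
    have hmaxbound : ∀ ζ : ℂ,
        ∏ j, ‖MvPolynomial.eval (fun i => r i + ζ * q i) (P j)‖ ^ (δ j ^ 2)
          ≤ M * (s2 + ‖ζ‖ ^ 2) ^ (H / 2) := by
      intro ζ
      set x : EuclideanSpace ℂ (Fin d) := r + ζ • q with hxdef
      have hxco : (fun i => x i) = (fun i => r i + ζ * q i) := by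
        funext i; simp [hxdef]
      have hxn : ‖x‖ ^ 2 = s2 + ‖ζ‖ ^ 2 := by
        rw [hxdef, norm_add_sq (𝕜 := ℂ), inner_smul_right, hrq, mul_zero, norm_smul]
        simp only [hqnorm, mul_one, hs2]
        simp [mul_pow]
      have hxneq : x ≠ 0 := by
        intro h
        rw [h] at hxn
        simp only [norm_zero] at hxn
        nlinarith [sq_nonneg (‖ζ‖)]
      have hxpos : 0 < ‖x‖ := norm_pos_iff.mpr hxneq
      have happ := hmax (‖x‖⁻¹ • x) (norm_smul_inv_norm hxneq)
      have hco : (fun i => (‖x‖⁻¹ • x) i) = (fun i => ((‖x‖⁻¹ : ℝ) : ℂ) * x i) := by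
        funext i
        simp [Complex.real_smul]
      rw [hco] at happ
      have hev : ∀ j, ‖MvPolynomial.eval (fun i => ((‖x‖⁻¹ : ℝ) : ℂ) * x i) (P j)‖
          = ‖x‖⁻¹ ^ (m j) * ‖MvPolynomial.eval (fun i => x i) (P j)‖ := by
        intro j
        rw [homog_eval_smul (hhom j), norm_mul, norm_pow]
        congr 2
        rw [Complex.norm_real, Real.norm_eq_abs]
        exact abs_of_nonneg (by positivity)
      have hsplit : ∀ j, (‖x‖⁻¹ ^ (m j) *
            ‖MvPolynomial.eval (fun i => x i) (P j)‖) ^ (δ j ^ 2)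
          = ‖x‖⁻¹ ^ ((m j : ℝ) * δ j ^ 2) *
            ‖MvPolynomial.eval (fun i => x i) (P j)‖ ^ (δ j ^ 2) := by
        intro j
        rw [Real.mul_rpow (by positivity) (norm_nonneg _),
          ← Real.rpow_natCast ‖x‖⁻¹ (m j), ← Real.rpow_mul (by positivity)]
      have hprod : ∏ j, ‖MvPolynomial.eval (fun i => ((‖x‖⁻¹ : ℝ) : ℂ) * x i) (P j)‖
            ^ (δ j ^ 2)
          = ‖x‖⁻¹ ^ H * ∏ j, ‖MvPolynomial.eval (fun i => x i) (P j)‖ ^ (δ j ^ 2) := by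
        calc ∏ j, ‖MvPolynomial.eval (fun i => ((‖x‖⁻¹ : ℝ) : ℂ) * x i) (P j)‖
              ^ (δ j ^ 2)
            = ∏ j, (‖x‖⁻¹ ^ ((m j : ℝ) * δ j ^ 2) *
              ‖MvPolynomial.eval (fun i => x i) (P j)‖ ^ (δ j ^ 2)) := by
              refine Finset.prod_congr rfl fun j _ => ?_
              rw [hev j, hsplit j]
          _ = (∏ j, ‖x‖⁻¹ ^ ((m j : ℝ) * δ j ^ 2)) *
              ∏ j, ‖MvPolynomial.eval (fun i => x i) (P j)‖ ^ (δ j ^ 2) :=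
              Finset.prod_mul_distrib
          _ = ‖x‖⁻¹ ^ H * ∏ j, ‖MvPolynomial.eval (fun i => x i) (P j)‖ ^ (δ j ^ 2) := by
              congr 1
              rw [← Real.rpow_sum_of_pos (by positivity) _ _]
              congr 1
              rw [hHdef]
              exact Finset.sum_congr rfl fun j _ => mul_comm _ _
      rw [hprod, hxco] at happ
      have hxH : ‖x‖ ^ H = (s2 + ‖ζ‖ ^ 2) ^ (H / 2) := by
        rw [← hxn, ← Real.rpow_natCast ‖x‖ 2, ← Real.rpow_mul (norm_nonneg x)]
        congr 1
        ring
      rw [Real.inv_rpow (norm_nonneg x)] at happ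
      have hxHpos : 0 < ‖x‖ ^ H := Real.rpow_pos_of_pos hxpos H
      rw [inv_mul_le_iff₀ hxHpos] at happ
      rw [← hxH, mul_comm M]
      exact happ
    have claim := core_margin P m hhom δ hδ k (fun i => q i) (fun i => r i)
      (fun i => p i) γ hpi hqzero hPp t s2 M H htdef ht hs2pos hMdef hMpos hHdef hmaxbound
    exact choose_R hw hwH hH1 ht hs2def hs2pos hs2w claim
  -- conclusion from the key estimate
  have hδk1 : δ k ≤ 1 := by nlinarith [hδ k, sq_nonneg t]
  rw [ge_iff_le, habs]
  have h1 : t ≤ Real.sqrt (1 - δ k ^ 2) := by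
    rw [← Real.sqrt_sq ht0]
    exact Real.sqrt_le_sqrt hfin
  have h2 : Real.sqrt (1 - δ k ^ 2) = Real.cos (Real.arcsin (δ k)) := (Real.cos_arcsin _).symm
  calc Real.arcsin (δ k)
      = Real.arccos (Real.cos (Real.arcsin (δ k))) := by
        rw [Real.arccos_cos (Real.arcsin_nonneg.mpr (hδ k).le)
          ((Real.arcsin_le_pi_div_two _).trans (by linarith [Real.pi_pos]))]
    _ ≤ Real.arccos t := by
        rw [Real.arccos_eq_pi_div_two_sub_arcsin, Real.arccos_eq_pi_div_two_sub_arcsin]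
        have : Real.arcsin t ≤ Real.arcsin (Real.cos (Real.arcsin (δ k))) := by
          apply Real.monotone_arcsin
          rw [← h2]; exact h1
        linarith
end

section
/- The sequence of rescaled Chebyshev polynomials x ↦ (-1)^k T_{2k}(x/(2k)) converges to cos(x) uniformly on every compact subset of ℝ, where T_n is the Chebyshev polynomial of the first kind. -/
open Real Polynomial Chebyshev Filter

/-- `|cos a - cos b| ≤ |a - b|`. -/
lemma my_abs_cos_sub_cos_le (a b : ℝ) : |Real.cos a - Real.cos b| ≤ |a - b| := by
  rw [Real.cos_sub_cos]
  have h1 : |Real.sin ((a + b) / 2)| ≤ 1 := Real.abs_sin_le_one _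
  have h2 : |Real.sin ((a - b) / 2)| ≤ |(a - b) / 2| := Real.abs_sin_le_abs
  have h3 : |(a - b) / 2| = |a - b| / 2 := abs_div (a - b) 2 ▸ by simp [abs_of_nonneg]
  calc |(-2) * Real.sin ((a + b) / 2) * Real.sin ((a - b) / 2)|
      = 2 * (|Real.sin ((a + b) / 2)| * |Real.sin ((a - b) / 2)|) := by
        rw [abs_mul, abs_mul]; ring_nf
    _ ≤ 2 * (1 * |(a - b) / 2|) := by
        gcongr
    _ ≤ |a - b| := by rw [h3]; linarith [abs_nonneg (a - b)]

/-- For `0 ≤ t ≤ 1/2`, `arcsin t - t ≤ t ^ 3`. -/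
lemma my_arcsin_sub_le {t : ℝ} (ht0 : 0 ≤ t) (ht : t ≤ 1 / 2) :
    Real.arcsin t - t ≤ t ^ 3 := by
  rcases eq_or_lt_of_le ht0 with h | h
  · simp [← h]
  set s := Real.arcsin t with hs
  have hst : Real.sin s = t := Real.sin_arcsin (by linarith) (by linarith)
  have hs0 : 0 < s := Real.arcsin_pos.2 h
  have hs2 : s ≤ π / 2 := Real.arcsin_le_pi_div_two t
  have hmul : 2 / π * s ≤ t := hst ▸ Real.mul_le_sin hs0.le hs2
  have hpi : (0:ℝ) < π := Real.pi_pos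
  have hsle : s ≤ π / 2 * t := by
    rw [div_mul_eq_mul_div, div_le_iff₀ hpi] at hmul
    nlinarith
  have hs1 : s ≤ 1 := by
    have : π / 2 * t ≤ π / 4 := by nlinarith
    have hpi4 : π ≤ 4 := Real.pi_le_four
    linarith
  have hcube : s - s ^ 3 / 4 < Real.sin s := by linarith [Real.sin_gt_sub_cube hs0, pow_pos hs0 3]
  have hpil : π < 3.15 := Real.pi_lt_d2
  have hs3 : s ^ 3 ≤ (π / 2) ^ 3 * t ^ 3 := by
    have := pow_le_pow_left₀ hs0.le hsle 3
    calc s ^ 3 ≤ (π / 2 * t) ^ 3 := this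
      _ = (π / 2) ^ 3 * t ^ 3 := by ring
  have hp3 : π ^ 3 ≤ 3.15 ^ 3 := by
    have := pow_le_pow_left₀ hpi.le hpil.le 3
    linarith
  have h4 : (π / 2) ^ 3 ≤ 4 := by
    rw [div_pow]; norm_num at hp3 ⊢; linarith
  nlinarith [pow_nonneg ht0 3]

lemma my_abs_arcsin_sub_le {t : ℝ} (ht : |t| ≤ 1 / 2) :
    |Real.arcsin t - t| ≤ |t| ^ 3 := by
  have key : ∀ u : ℝ, 0 ≤ u → u ≤ 1 / 2 → |Real.arcsin u - u| ≤ u ^ 3 := by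
    intro u hu0 hu
    have h1 : Real.arcsin u - u ≤ u ^ 3 := my_arcsin_sub_le hu0 hu
    have h2 : u ≤ Real.arcsin u := by
      have := Real.sin_le (Real.arcsin_nonneg.2 hu0)
      rwa [Real.sin_arcsin (by linarith) (by linarith)] at this
    rw [abs_of_nonneg (by linarith)]
    exact h1
  rcases le_or_gt 0 t with h | h
  · rw [abs_of_nonneg h] at ht ⊢
    exact key t h ht
  · rw [abs_of_neg h] at ht ⊢
    have := key (-t) (by linarith) ht
    rwa [Real.arcsin_neg, ← abs_neg, neg_sub, sub_neg_eq_add, ← sub_eq_neg_add] at this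

/-- The rescaled Chebyshev polynomials `(-1)^k T_{2k}(x/(2k))` converge to
`cos x` uniformly on every compact subset of `ℝ`. -/
theorem chebyshev_even_tendsto_cos (K : Set ℝ) (hK : IsCompact K) :
    TendstoUniformlyOn
      (fun (k : ℕ) (x : ℝ) =>
        (-1 : ℝ) ^ k * (Polynomial.Chebyshev.T ℝ (2 * k)).eval (x / (2 * k)))
      Real.cos Filter.atTop K := by
  obtain ⟨M, hM⟩ := hK.isBounded.subset_closedBall 0
  have hM' : ∀ x ∈ K, |x| ≤ M := fun x hx => by
    simpa [Real.dist_eq] using hM hx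
  have hM0 : 0 ≤ M ∨ K = ∅ := by
    rcases Set.eq_empty_or_nonempty K with h | ⟨x, hx⟩
    · exact Or.inr h
    · exact Or.inl ((abs_nonneg x).trans (hM' x hx))
  rcases hM0 with hM0 | hKe
  swap
  · rw [Metric.tendstoUniformlyOn_iff]
    intro ε hε
    filter_upwards with k x hx
    rw [hKe] at hx; exact absurd hx (Set.notMem_empty x)
  rw [Metric.tendstoUniformlyOn_iff]
  intro ε hε
  filter_upwards [Filter.eventually_ge_atTop (⌈M⌉₊ + ⌈M ^ 3 / (4 * ε)⌉₊ + 1)] with k hk x hx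
  have hk1 : 1 ≤ k := le_trans (by omega) hk
  have hkM : M ≤ k := le_trans (Nat.le_ceil M) (by exact_mod_cast le_trans (by omega) hk)
  have hkε : M ^ 3 / (4 * ε) < k :=
    lt_of_le_of_lt (Nat.le_ceil _) (by exact_mod_cast Nat.lt_of_lt_of_le (by omega) hk)
  have hkpos : (0:ℝ) < k := by exact_mod_cast hk1
  have hx' : |x| ≤ M := hM' x hx
  set t : ℝ := x / (2 * k) with hts
  have ht : |t| ≤ 1 / 2 := by
    rw [hts, abs_div, abs_of_nonneg (by positivity : (0:ℝ) ≤ 2 * (k:ℝ))]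
    rw [div_le_iff₀ (by positivity)]
    calc |x| ≤ M := hx'
      _ ≤ (k:ℝ) := hkM
      _ = 1 / 2 * (2 * k) := by ring
  have ht1 : -1 ≤ t := by
    have := abs_le.1 ht; linarith [this.1]
  have ht1' : t ≤ 1 := by
    have := abs_le.1 ht; linarith [this.2]
  -- evaluate the Chebyshev polynomial
  have heval : (Polynomial.Chebyshev.T ℝ (2 * k)).eval t
      = Real.cos ((2 * (k:ℝ)) * Real.arccos t) := by
    have := Polynomial.Chebyshev.T_real_cos (Real.arccos t) (2 * k)
    rw [Real.cos_arccos ht1 ht1'] at this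
    rw [this]
    push_cast
    ring_nf
  have harccos : Real.arccos t = π / 2 - Real.arcsin t := Real.arccos_eq_pi_div_two_sub_arcsin t
  -- cos x = (-1)^k cos (kπ - x)
  have hcosx : Real.cos x = (-1 : ℝ) ^ k * Real.cos ((k:ℝ) * π - x) := by
    rw [Real.cos_nat_mul_pi_sub]
    rw [← mul_assoc, ← pow_add, ← two_mul, pow_mul]
    norm_num
  rw [Real.dist_eq, hcosx, heval, ← mul_sub, abs_mul, abs_pow, abs_neg, abs_one, one_pow, one_mul]
  have hlip := my_abs_cos_sub_cos_le ((k:ℝ) * π - x) ((2 * (k:ℝ)) * Real.arccos t)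
  have harg : (k:ℝ) * π - x - (2 * (k:ℝ)) * Real.arccos t = 2 * k * (Real.arcsin t - t) := by
    rw [harccos, hts]
    field_simp
    ring
  have harcsin := my_abs_arcsin_sub_le ht
  have habs3 : |t| ^ 3 ≤ M ^ 3 / (2 * k) ^ 3 := by
    rw [hts, abs_div, abs_of_nonneg (by positivity : (0:ℝ) ≤ 2 * (k:ℝ)), div_pow]
    gcongr
  calc |Real.cos ((k:ℝ) * π - x) - Real.cos ((2 * (k:ℝ)) * Real.arccos t)|
      ≤ |(k:ℝ) * π - x - (2 * (k:ℝ)) * Real.arccos t| := hlip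
    _ = 2 * k * |Real.arcsin t - t| := by
        rw [harg, abs_mul, abs_of_nonneg (by positivity : (0:ℝ) ≤ 2 * (k:ℝ))]
    _ ≤ 2 * k * (M ^ 3 / (2 * k) ^ 3) := by
        gcongr
        exact harcsin.trans habs3
    _ = M ^ 3 / (4 * k ^ 2) := by
        field_simp
        ring
    _ < ε := by
        rw [div_lt_iff₀ (by positivity)]
        rw [div_lt_iff₀ (by positivity)] at hkε
        have hk1' : (1:ℝ) ≤ (k:ℝ) := by exact_mod_cast hk1
        have hk2 : (k:ℝ) ≤ (k:ℝ) ^ 2 := by nlinarith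
        nlinarith [mul_le_mul_of_nonneg_left hk2 hε.le]
end

section
/- Let Q ∈ ℂ[z] be a polynomial with Q(0) ≠ 0, let n ≥ 1 and D ≤ n, and define F(z) = |z Q(z)| (1 + |z|²)^{-n/2} on ℂ. If F attains its maximum on ℂ at a point a > 0 real, then a² ≥ 1/(n-1) (when n ≥ 2). -/
open Real

private lemma key_mono (n : ℕ) (hn : 2 ≤ n) {s₁ s₂ : ℝ} (h1 : 0 < s₁) (h12 : s₁ < s₂)
    (h2 : s₂ ≤ 1 / ((n : ℝ) - 1)) : s₁ * (1 + s₂) ^ n < s₂ * (1 + s₁) ^ n := by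
  have hn1 : (1:ℝ) ≤ (n:ℝ) - 1 := by
    have : (2:ℝ) ≤ (n:ℝ) := by exact_mod_cast hn
    linarith
  set c := 1 / ((n:ℝ) - 1) with hc
  have hcpos : 0 < c := by
    apply div_pos one_pos; linarith
  set φ : ℝ → ℝ := fun s => Real.log s - n * Real.log (1 + s) with hφ
  have hd : ∀ s : ℝ, 0 < s → HasDerivAt φ (s⁻¹ - n * (1 + s)⁻¹) s := by
    intro s hs
    have h1s : (0:ℝ) < 1 + s := by linarith
    have d1 : HasDerivAt Real.log s⁻¹ s := Real.hasDerivAt_log hs.ne'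
    have d0 : HasDerivAt (fun x : ℝ => 1 + x) 1 s := (hasDerivAt_id s).const_add 1
    have d2 : HasDerivAt (fun x : ℝ => Real.log (1 + x)) (1+s)⁻¹ s := by
      exact ((Real.hasDerivAt_log h1s.ne').comp s d0).congr_deriv (mul_one _)
    exact d1.sub (d2.const_mul (n:ℝ))
  have hmono : StrictMonoOn φ (Set.Ioc 0 c) := by
    apply strictMonoOn_of_deriv_pos (convex_Ioc 0 c)
    · exact fun s hs => (hd s hs.1).continuousAt.continuousWithinAt
    · intro s hs
      rw [interior_Ioc] at hs
      rw [(hd s hs.1).deriv]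
      have h1s : (0:ℝ) < 1 + s := by linarith [hs.1]
      have hlt : s * ((n:ℝ) - 1) < 1 := by
        have := hs.2
        rw [hc, lt_div_iff₀ (by linarith : (0:ℝ) < (n:ℝ)-1)] at this
        exact this
      have : (n:ℝ) * (1+s)⁻¹ < s⁻¹ := by
        rw [inv_eq_one_div, inv_eq_one_div, mul_one_div, div_lt_div_iff₀ h1s hs.1]
        nlinarith [hs.1]
      linarith
  have hφlt : φ s₁ < φ s₂ :=
    hmono ⟨h1, h12.le.trans h2⟩ ⟨h1.trans h12, h2⟩ h12
  have h1s1 : (0:ℝ) < 1 + s₁ := by linarith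
  have h1s2 : (0:ℝ) < 1 + s₂ := by linarith
  have hA : Real.log (s₁ * (1+s₂)^n) = Real.log s₁ + n * Real.log (1+s₂) := by
    rw [Real.log_mul h1.ne' (pow_pos h1s2 n).ne', Real.log_pow]
  have hB : Real.log (s₂ * (1+s₁)^n) = Real.log s₂ + n * Real.log (1+s₁) := by
    rw [Real.log_mul (h1.trans h12).ne' (pow_pos h1s1 n).ne', Real.log_pow]
  have hlog : Real.log (s₁ * (1+s₂)^n) < Real.log (s₂ * (1+s₁)^n) := by
    rw [hA, hB]; simp only [hφ] at hφlt; linarith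
  calc s₁ * (1+s₂)^n = Real.exp (Real.log (s₁ * (1+s₂)^n)) := by
        rw [Real.exp_log (mul_pos h1 (pow_pos h1s2 n))]
    _ < Real.exp (Real.log (s₂ * (1+s₁)^n)) := Real.exp_lt_exp.mpr hlog
    _ = s₂ * (1+s₁)^n := Real.exp_log (mul_pos (h1.trans h12) (pow_pos h1s1 n))

/-- Let `Q ∈ ℂ[z]` be a nonzero polynomial of degree at most `n - 1` with
`Q(0) ≠ 0`, `n ≥ 2`, and `F(z) = |z Q(z)| (1 + |z|²)^{-n/2}`. If `F` attains its maximum on `ℂ`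
at a real point `a > 0`, then `a² ≥ 1/(n-1)`. -/
theorem cp1_max_point_far_from_zero
    (n : ℕ) (hn : 2 ≤ n) (Q : Polynomial ℂ) (hQ0 : Q.eval 0 ≠ 0)
    (hdeg : Q.natDegree ≤ n - 1)
    (F : ℂ → ℝ)
    (hF : ∀ z : ℂ, F z =
      ‖z‖ * ‖Q.eval z‖ * (1 + ‖z‖ ^ 2) ^ (-(n : ℝ) / 2))
    (a : ℝ) (ha : 0 < a)
    (hmax : ∀ z : ℂ, F z ≤ F (a : ℂ)) :
    a ^ 2 ≥ 1 / ((n : ℝ) - 1) := by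
  by_contra hcon
  push_neg at hcon
  have hn1 : (1:ℝ) ≤ (n:ℝ) - 1 := by
    have : (2:ℝ) ≤ (n:ℝ) := by exact_mod_cast hn
    linarith
  set c := 1 / ((n:ℝ) - 1) with hc
  have hcpos : 0 < c := div_pos one_pos (by linarith)
  set t := Real.sqrt c with htdef
  have htpos : 0 < t := Real.sqrt_pos.mpr hcpos
  have ht2 : t ^ 2 = c := Real.sq_sqrt hcpos.le
  have hat : a < t := lt_of_pow_lt_pow_left₀ 2 htpos.le (by rw [ht2]; exact hcon)
  -- |Q(a)| > 0
  have hQne : Q ≠ 0 := fun h => hQ0 (by simp [h])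
  have hroots : {z : ℂ | Q.IsRoot z}.Finite := Polynomial.finite_setOf_isRoot hQne
  have hS : {x : ℝ | Q.eval (x:ℂ) = 0}.Finite := by
    have : {x : ℝ | Q.eval (x:ℂ) = 0} = (fun x : ℝ => (x:ℂ)) ⁻¹' {z : ℂ | Q.IsRoot z} := rfl
    rw [this]
    exact hroots.preimage (fun x _ y _ h => Complex.ofReal_injective h)
  obtain ⟨x, hxIoi, hxQ⟩ : ((Set.Ioi (0:ℝ)) \ {x : ℝ | Q.eval (x:ℂ) = 0}).Nonempty :=
    ((Set.Ioi_infinite (0:ℝ)).diff hS).nonempty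
  have hx0 : 0 < x := hxIoi
  have habsx : ‖(x:ℂ)‖ = x := by
    rw [Complex.norm_of_nonneg hx0.le]
  have hFx : 0 < F (x:ℂ) := by
    rw [hF, habsx]
    have h1 : 0 < ‖Q.eval (x:ℂ)‖ := norm_pos_iff.mpr hxQ
    have h2 : (0:ℝ) < (1 + x ^ 2) ^ (-(n : ℝ) / 2) := Real.rpow_pos_of_pos (by positivity) _
    positivity
  have habsa : ‖(a:ℂ)‖ = a := by
    rw [Complex.norm_of_nonneg ha.le]
  have hQa : 0 < ‖Q.eval (a:ℂ)‖ := by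
    rcases (norm_nonneg (Q.eval (a:ℂ))).lt_or_eq with h | h
    · exact h
    · exfalso
      have hm := hmax (x:ℂ)
      rw [hF (a:ℂ), ← h] at hm
      simp only [mul_zero, zero_mul] at hm
      linarith [hFx]
  -- maximum modulus principle: find z₀ on sphere of radius t with |Q(z₀)| ≥ |Q(a)|
  have hcont : Continuous fun z : ℂ => Q.eval z := Q.continuous
  have hsph : (Metric.sphere (0:ℂ) t).Nonempty := by
    refine ⟨(t:ℂ), ?_⟩
    simp [Complex.dist_eq, Complex.norm_real, abs_of_pos htpos]
  obtain ⟨z₀, hz₀mem, hz₀max⟩ :=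
    (isCompact_sphere (0:ℂ) t).exists_isMaxOn hsph (hcont.norm.continuousOn)
  have hz₀t : ‖z₀‖ = t := by
    have := mem_sphere_zero_iff_norm.mp hz₀mem
    exact this
  have hle : ‖Q.eval (a:ℂ)‖ ≤ ‖Q.eval z₀‖ := by
    have hball : (a:ℂ) ∈ closure (Metric.ball (0:ℂ) t) := by
      apply subset_closure
      simp only [Metric.mem_ball, Complex.dist_eq, sub_zero]
      rw [Complex.norm_of_nonneg ha.le]; exact hat
    have h := Complex.norm_le_of_forall_mem_frontier_norm_le (Metric.isBounded_ball)
      (Q.differentiable.diffContOnCl) (C := ‖Q.eval z₀‖) ?_ hball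
    · exact h
    · intro z hz
      rw [frontier_ball (0:ℂ) htpos.ne'] at hz
      exact hz₀max hz
  -- squared comparison
  have hsq : a^2 * (1 + t^2)^n < t^2 * (1 + a^2)^n :=
    key_mono n hn (by positivity) (by rw [ht2]; exact hcon) (ht2.le.trans hc.le)
  have hsqf : ∀ u : ℝ, 0 ≤ u → (u * (1+u^2) ^ (-(n:ℝ)/2))^2 = u^2 * ((1+u^2)^n)⁻¹ := by
    intro u hu
    have h1u : (0:ℝ) < 1 + u^2 := by positivity
    rw [mul_pow, ← Real.rpow_natCast ((1+u^2) ^ (-(n:ℝ)/2)) 2, ← Real.rpow_mul h1u.le]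
    have he : (-(n:ℝ)/2) * ((2:ℕ):ℝ) = -(n:ℝ) := by push_cast; ring
    rw [he, Real.rpow_neg h1u.le, Real.rpow_natCast]
  have hgpos : 0 < t * (1+t^2) ^ (-(n:ℝ)/2) := by positivity
  have key : a * (1+a^2) ^ (-(n:ℝ)/2) < t * (1+t^2) ^ (-(n:ℝ)/2) := by
    apply lt_of_pow_lt_pow_left₀ 2 hgpos.le
    rw [hsqf a ha.le, hsqf t htpos.le]
    rw [← div_eq_mul_inv, ← div_eq_mul_inv,
      div_lt_div_iff₀ (by positivity) (by positivity)]
    linarith [hsq]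
  have hFz : F (a:ℂ) < F z₀ := by
    rw [hF (a:ℂ), hF z₀, habsa, hz₀t]
    have e1 := mul_lt_mul_of_pos_right key hQa
    have e2 : t * (1+t^2)^(-(n:ℝ)/2) * ‖Q.eval (a:ℂ)‖ ≤
        t * (1+t^2)^(-(n:ℝ)/2) * ‖Q.eval z₀‖ :=
      mul_le_mul_of_nonneg_left hle hgpos.le
    calc a * ‖Q.eval (a:ℂ)‖ * (1+a^2)^(-(n:ℝ)/2)
        = a * (1+a^2)^(-(n:ℝ)/2) * ‖Q.eval (a:ℂ)‖ := by ring
      _ < t * (1+t^2)^(-(n:ℝ)/2) * ‖Q.eval (a:ℂ)‖ := e1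
      _ ≤ t * (1+t^2)^(-(n:ℝ)/2) * ‖Q.eval z₀‖ := e2
      _ = t * ‖Q.eval z₀‖ * (1+t^2)^(-(n:ℝ)/2) := by ring
  exact absurd (hmax z₀) (not_le.mpr hFz)
end
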